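/- A binary matroid M is chordal (every circuit with at least 4 elements has a chord) if and only if its Orlik–Solomon algebra is quadratic, i.e., ℑ(𝔠) = ℑ(𝔠₃). -/

import Mathlib

open ExteriorAlgebra

/-- The Grassmann algebra over `K` on generators `e 0, ..., e (n-1)`. -/
abbrev Grass (K : Type) [Field K] (n : ℕ) := ExteriorAlgebra K (Fin n → K)

/-- The generator `e i`. -/
noncomputable def gen (K : Type) [Field K] (n : ℕ) (i : Fin n) : Grass K n :=
  ExteriorAlgebra.ι K (Pi.single i 1)

/-- The monomial associated to a list of indices. -/
noncomputable def monList (K : Type) [Field K] (n : ℕ) (l : List (Fin n)) : Grass K n :=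
  (l.map (gen K n)).prod

/-- The monomial `e_X` of a subset `X ⊆ [n]`, factors in increasing order. -/
noncomputable def mon (K : Type) [Field K] (n : ℕ) (X : Finset (Fin n)) : Grass K n :=
  monList K n (X.sort (· ≤ ·))

/-- The degree `-1` antiderivation `∂` on the Grassmann algebra with `∂ (e i) = 1`
(left contraction with the covector sending each generator to `1`). -/
noncomputable def bd (K : Type) [Field K] (n : ℕ) : Grass K n →ₗ[K] Grass K n :=
  CliffordAlgebra.contractLeft (∑ i : Fin n, LinearMap.proj i)

/-- The two-sided ideal `ℑ(𝔛)` generated by the differentials `∂ e_Y`, `Y ∈ 𝔛`. -/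
noncomputable def OSIdeal (K : Type) [Field K] (n : ℕ) (X : Set (Finset (Fin n))) :
    TwoSidedIdeal (Grass K n) :=
  TwoSidedIdeal.span ((fun Y => bd K n (mon K n Y)) '' X)

/-- A circuit of a matroid: a minimal dependent (finite) set. -/
def IsCircuit {α : Type} [DecidableEq α] (M : Matroid α) (C : Finset α) : Prop :=
  M.Dep (C : Set α) ∧ ∀ D : Finset α, D ⊂ C → ¬ M.Dep (D : Set α)

/-- `i` is a chord of the circuit `C`, witnessed by circuits `C₁, C₂` with
`C₁ ∩ C₂ = {i}` and `C = C₁ Δ C₂`. -/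
def IsChord {α : Type} [DecidableEq α] (M : Matroid α) (C : Finset α) (i : α) : Prop :=
  ∃ C₁ C₂ : Finset α, IsCircuit M C₁ ∧ IsCircuit M C₂ ∧ C₁ ∩ C₂ = {i} ∧ C = symmDiff C₁ C₂

def HasChord {α : Type} [DecidableEq α] (M : Matroid α) (C : Finset α) : Prop :=
  ∃ i, IsChord M C i

/-- `M` is `ℓ`-chordal: every circuit with at least `ℓ` elements has a chord. -/
def Chordal {α : Type} [DecidableEq α] (M : Matroid α) (l : ℕ) : Prop :=
  ∀ C : Finset α, IsCircuit M C → l ≤ C.card → HasChord M C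

/-- `M` is simple: every circuit has at least 3 elements. -/
def SimpleM {α : Type} [DecidableEq α] (M : Matroid α) : Prop :=
  ∀ C : Finset α, IsCircuit M C → 3 ≤ C.card

/-- `M` is binary: the symmetric difference of two distinct circuits contains a circuit. -/
def BinaryM {α : Type} [DecidableEq α] (M : Matroid α) : Prop :=
  ∀ C D : Finset α, IsCircuit M C → IsCircuit M D → C ≠ D →
    ∃ C', IsCircuit M C' ∧ C' ⊆ symmDiff C D

/-- The set `𝔠` of circuits of `M`. -/
def Circuits {α : Type} [DecidableEq α] (M : Matroid α) : Set (Finset α) :=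
  {C | IsCircuit M C}

/-- The set `𝔠_k` of circuits of `M` with at most `k` elements. -/
def CircuitsLe {α : Type} [DecidableEq α] (M : Matroid α) (k : ℕ) : Set (Finset α) :=
  {C | IsCircuit M C ∧ C.card ≤ k}


set_option synthInstance.maxHeartbeats 1000000

section Aux

variable {K : Type} [Field K] {n : ℕ}

lemma monList_nil : monList K n [] = 1 := rfl

lemma monList_cons (a : Fin n) (l : List (Fin n)) :
    monList K n (a :: l) = gen K n a * monList K n l := by
  simp [monList]

lemma monList_append (l₁ l₂ : List (Fin n)) :
    monList K n (l₁ ++ l₂) = monList K n l₁ * monList K n l₂ := by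
  simp [monList]

lemma gen_anticomm (a b : Fin n) : gen K n a * gen K n b = -(gen K n b * gen K n a) := by
  have := ι_add_mul_swap (R := K) (Pi.single a (1:K) : Fin n → K) (Pi.single b 1)
  rw [gen, gen]
  linear_combination (norm := noncomm_ring) this

lemma gen_sq (a : Fin n) : gen K n a * gen K n a = 0 := ι_sq_zero _

lemma bd_gen_mul (a : Fin n) (x : Grass K n) :
    bd K n (gen K n a * x) = x - gen K n a * bd K n x := by
  have h := CliffordAlgebra.contractLeft_ι_mul (Q := (0 : QuadraticForm K (Fin n → K)))
    (d := ∑ i : Fin n, LinearMap.proj i) (Pi.single a 1) x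
  have hd : (∑ i : Fin n, LinearMap.proj (R := K) (φ := fun _ : Fin n => K) i) (Pi.single a 1)
      = 1 := by
    simp [LinearMap.proj, Pi.single_apply]
  rw [bd, gen]
  rw [show (ExteriorAlgebra.ι K : (Fin n → K) →ₗ[K] Grass K n) = CliffordAlgebra.ι 0 from rfl]
  rw [h, hd, one_smul]

lemma bd_one : bd K n 1 = 0 := by
  have := CliffordAlgebra.contractLeft_algebraMap (R := K) (M := Fin n → K)
    (0 : QuadraticForm K (Fin n → K)) (∑ i : Fin n, LinearMap.proj i) 1
  simp only [map_one] at this; exact this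

lemma bd_gen (a : Fin n) : bd K n (gen K n a) = 1 := by
  have := bd_gen_mul (K := K) (n := n) a 1
  simpa [bd_one] using this

def IsPM {K : Type} [Field K] (c : K) : Prop := c = 1 ∨ c = -1

variable {K : Type} [Field K] {n : ℕ}

lemma IsPM.one : IsPM (1 : K) := Or.inl rfl

lemma IsPM.neg {c : K} (h : IsPM c) : IsPM (-c) := by
  rcases h with h | h <;> simp [IsPM, h]

lemma IsPM.mul {c d : K} (hc : IsPM c) (hd : IsPM d) : IsPM (c * d) := by
  rcases hc with h | h <;> rcases hd with h' | h' <;> simp [IsPM, h, h']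

lemma IsPM.ne_zero {c : K} (h : IsPM c) : c ≠ 0 := by
  rcases h with h | h <;> simp [h]

/-- permutation changes `monList` only by a sign -/
lemma monList_perm {l l' : List (Fin n)} (h : l.Perm l') :
    ∃ c : K, IsPM c ∧ monList K n l = c • monList K n l' := by
  induction h with
  | nil => exact ⟨1, IsPM.one, by simp⟩
  | cons a h ih =>
      obtain ⟨c, hc, hee⟩ := ih
      exact ⟨c, hc, by rw [monList_cons, monList_cons, hee, mul_smul_comm]⟩
  | swap a b l =>
      refine ⟨-1, IsPM.one.neg, ?_⟩
      rw [monList_cons, monList_cons, monList_cons, monList_cons, ← mul_assoc, ← mul_assoc,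
        gen_anticomm]
      simp
  | trans h₁ h₂ ih₁ ih₂ =>
      obtain ⟨c, hc, hee⟩ := ih₁
      obtain ⟨c', hc', hee'⟩ := ih₂
      exact ⟨c * c', hc.mul hc', by rw [hee, hee', smul_smul]⟩

lemma monList_not_nodup {l : List (Fin n)} (h : ¬ l.Nodup) : monList K n l = 0 := by
  induction l with
  | nil => simp at h
  | cons a t ih =>
      rw [List.nodup_cons, not_and_or] at h
      rw [monList_cons]
      rcases h with h | h
      · push_neg at h
        obtain ⟨c, hc, hee⟩ := monList_perm (K := K) (List.perm_cons_erase h)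
        rw [hee, mul_smul_comm, monList_cons, ← mul_assoc, gen_sq, zero_mul, smul_zero]
      · rw [ih h, mul_zero]

/-- super-Leibniz rule for `bd` against a left monomial factor -/
lemma bd_monList_mul (l : List (Fin n)) (y : Grass K n) :
    bd K n (monList K n l * y)
      = bd K n (monList K n l) * y + ((-1 : K) ^ l.length) • (monList K n l * bd K n y) := by
  induction l with
  | nil => simp [monList_nil, bd_one]
  | cons a t ih =>
      rw [monList_cons, mul_assoc, bd_gen_mul, ih, bd_gen_mul]
      rw [List.length_cons, pow_succ, mul_neg_one, neg_smul, mul_add, mul_smul_comm]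
      simp only [mul_assoc, sub_eq_add_neg, neg_add, add_mul, neg_mul, smul_mul_assoc]
      abel


lemma smul_mem_tsi (I : TwoSidedIdeal (Grass K n)) (c : K) {x : Grass K n} (h : x ∈ I) :
    c • x ∈ I := by
  rw [Algebra.smul_def]
  exact I.mul_mem_left _ _ h

lemma bd_split (l₁ l₂ : List (Fin n)) (i : Fin n) :
    bd K n (monList K n (l₁ ++ l₂))
      = bd K n (monList K n l₁) * bd K n (monList K n (i :: l₂))
        + bd K n (monList K n (l₁ ++ [i])) * bd K n (monList K n l₂) := by
  have hsing : monList K n [i] = gen K n i := by simp [monList]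
  rw [monList_append l₁ l₂, bd_monList_mul, monList_cons, bd_gen_mul,
    monList_append l₁ [i], bd_monList_mul l₁ (monList K n [i]), hsing, bd_gen, mul_one]
  simp only [mul_sub, add_mul, smul_mul_assoc, mul_assoc, sub_eq_add_neg, mul_add, mul_smul_comm, neg_smul, one_smul, mul_neg]
  abel

/-- `mon` of a finset equals `± monList` of any nodup listing of it. -/
lemma monList_eq_smul_mon {l : List (Fin n)} (hl : l.Nodup) :
    ∃ c : K, IsPM c ∧ monList K n l = c • mon K n l.toFinset := by
  have hperm : l.Perm (l.toFinset.sort (· ≤ ·)) := by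
    refine List.perm_of_nodup_nodup_toFinset_eq hl (Finset.sort_nodup _ _) ?_
    rw [Finset.sort_toFinset]
  exact monList_perm hperm

variable {M : Matroid (Fin n)}

lemma circuits_mem (hch : Chordal M 4) (hs : SimpleM M) :
    ∀ C : Finset (Fin n), IsCircuit M C → bd K n (mon K n C) ∈ OSIdeal K n (CircuitsLe M 3) := by
  suffices H : ∀ m : ℕ, ∀ C : Finset (Fin n), C.card ≤ m → IsCircuit M C →
      bd K n (mon K n C) ∈ OSIdeal K n (CircuitsLe M 3) by
    exact fun C hC => H C.card C le_rfl hC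
  intro m
  induction m with
  | zero =>
      intro C hcard hC
      exact TwoSidedIdeal.subset_span ⟨C, ⟨hC, by omega⟩, rfl⟩
  | succ m ih =>
      intro C hcard hC
      by_cases h3 : C.card ≤ 3
      · exact TwoSidedIdeal.subset_span ⟨C, ⟨hC, h3⟩, rfl⟩
      obtain ⟨i, C₁, C₂, h1, h2, hint, hsd⟩ := hch C hC (by omega)
      have hi1 : i ∈ C₁ := by
        have : i ∈ C₁ ∩ C₂ := by rw [hint]; exact Finset.mem_singleton_self i
        exact (Finset.mem_inter.mp this).1
      have hi2 : i ∈ C₂ := by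
        have : i ∈ C₁ ∩ C₂ := by rw [hint]; exact Finset.mem_singleton_self i
        exact (Finset.mem_inter.mp this).2
      have hmem_iff : ∀ x : Fin n, (x ∈ C₁ ∧ x ∈ C₂) ↔ x = i := by
        intro x
        have := Finset.ext_iff.mp hint x
        simpa using this
      have hC12 : C = (C₁.erase i) ∪ (C₂.erase i) := by
        rw [hsd]
        ext x
        simp only [Finset.mem_union, Finset.mem_erase, Finset.mem_symmDiff]
        have := hmem_iff x
        constructor
        · rintro (⟨hx1, hx2⟩ | ⟨hx2, hx1⟩)
          · exact Or.inl ⟨fun h => hx2 (h ▸ hi2), hx1⟩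
          · exact Or.inr ⟨fun h => hx1 (h ▸ hi1), hx2⟩
        · rintro (⟨hxi, hx1⟩ | ⟨hxi, hx2⟩)
          · exact Or.inl ⟨hx1, fun h => hxi (this.mp ⟨hx1, h⟩)⟩
          · exact Or.inr ⟨hx2, fun h => hxi (this.mp ⟨h, hx2⟩)⟩
      have hdisj : Disjoint (C₁.erase i) (C₂.erase i) := by
        rw [Finset.disjoint_left]
        intro x hx1 hx2
        exact (Finset.mem_erase.mp hx1).1
          ((hmem_iff x).mp ⟨(Finset.mem_erase.mp hx1).2, (Finset.mem_erase.mp hx2).2⟩)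
      have hcardC : C.card = (C₁.card - 1) + (C₂.card - 1) := by
        rw [hC12, Finset.card_union_of_disjoint hdisj,
          Finset.card_erase_of_mem hi1, Finset.card_erase_of_mem hi2]
      have hc1 : 3 ≤ C₁.card := hs _ h1
      have hc2 : 3 ≤ C₂.card := hs _ h2
      have hm1 : C₁.card ≤ m := by omega
      have hm2 : C₂.card ≤ m := by omega
      -- the sorted lists
      set l₁ := (C₁.erase i).sort (· ≤ ·) with hl₁
      set l₂ := (C₂.erase i).sort (· ≤ ·) with hl₂
      have hnd₁ : l₁.Nodup := Finset.sort_nodup _ _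
      have hnd₂ : l₂.Nodup := Finset.sort_nodup _ _
      have htf₁ : l₁.toFinset = C₁.erase i := Finset.sort_toFinset _ _
      have htf₂ : l₂.toFinset = C₂.erase i := Finset.sort_toFinset _ _
      have hinotl₁ : i ∉ l₁ := by
        intro h
        have : i ∈ C₁.erase i := htf₁ ▸ List.mem_toFinset.mpr h
        simp at this
      have hinotl₂ : i ∉ l₂ := by
        intro h
        have : i ∈ C₂.erase i := htf₂ ▸ List.mem_toFinset.mpr h
        simp at this
      have hldisj : l₁.Disjoint l₂ := by
        intro x hx1 hx2
        have hx1' : x ∈ C₁.erase i := htf₁ ▸ List.mem_toFinset.mpr hx1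
        have hx2' : x ∈ C₂.erase i := htf₂ ▸ List.mem_toFinset.mpr hx2
        exact Finset.disjoint_left.mp hdisj hx1' hx2'
      have hnd : (l₁ ++ l₂).Nodup := List.Nodup.append hnd₁ hnd₂ hldisj
      have htf : (l₁ ++ l₂).toFinset = C := by
        rw [List.toFinset_append, htf₁, htf₂, hC12]
      -- express the three monomials
      obtain ⟨c, hc, hmc⟩ := monList_eq_smul_mon (K := K) hnd
      rw [htf] at hmc
      have hnd1i : (l₁ ++ [i]).Nodup := by
        refine List.Nodup.append hnd₁ (List.nodup_singleton i) ?_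
        intro x hx1 hx2
        rw [List.mem_singleton] at hx2
        exact hinotl₁ (hx2 ▸ hx1)
      have htf1i : (l₁ ++ [i]).toFinset = C₁ := by
        rw [List.toFinset_append, htf₁]
        simp only [List.toFinset_cons, List.toFinset_nil, insert_empty_eq]
        rw [Finset.union_comm, ← Finset.insert_eq, Finset.insert_erase hi1]
      have hnd2i : (i :: l₂).Nodup := List.nodup_cons.mpr ⟨hinotl₂, hnd₂⟩
      have htf2i : (i :: l₂).toFinset = C₂ := by
        rw [List.toFinset_cons, htf₂, Finset.insert_erase hi2]
      obtain ⟨c₁, hc₁, hmc₁⟩ := monList_eq_smul_mon (K := K) hnd1i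
      rw [htf1i] at hmc₁
      obtain ⟨c₂, hc₂, hmc₂⟩ := monList_eq_smul_mon (K := K) hnd2i
      rw [htf2i] at hmc₂
      -- memberships
      have hg1 : bd K n (mon K n C₁) ∈ OSIdeal K n (CircuitsLe M 3) := ih C₁ hm1 h1
      have hg2 : bd K n (mon K n C₂) ∈ OSIdeal K n (CircuitsLe M 3) := ih C₂ hm2 h2
      have hsplit := bd_split (K := K) l₁ l₂ i
      have hmain : bd K n (monList K n (l₁ ++ l₂)) ∈ OSIdeal K n (CircuitsLe M 3) := by
        rw [hsplit, hmc₁, hmc₂, map_smul, map_smul]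
        refine TwoSidedIdeal.add_mem _ ?_ ?_
        · rw [mul_smul_comm]
          exact smul_mem_tsi _ _ ((OSIdeal K n (CircuitsLe M 3)).mul_mem_left _ _ hg2)
        · rw [smul_mul_assoc]
          exact smul_mem_tsi _ _ ((OSIdeal K n (CircuitsLe M 3)).mul_mem_right _ _ hg1)
      -- conclude
      have : monList K n (l₁ ++ l₂) = c • mon K n C := hmc
      have hmonC : mon K n C = c⁻¹ • monList K n (l₁ ++ l₂) := by
        rw [this, smul_smul, inv_mul_cancel₀ hc.ne_zero, one_smul]
      rw [hmonC, map_smul]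
      exact smul_mem_tsi _ _ hmain

/-! ### Contraction functional machinery for the reverse direction -/

noncomputable def cL (j : Fin n) : Grass K n →ₗ[K] Grass K n :=
  CliffordAlgebra.contractLeft (LinearMap.proj j)

lemma cL_gen_mul (j a : Fin n) (x : Grass K n) :
    cL j (gen K n a * x) = (if j = a then x else (0 : Grass K n)) - gen K n a * cL j x := by
  have h := CliffordAlgebra.contractLeft_ι_mul (Q := (0 : QuadraticForm K (Fin n → K)))
    (d := LinearMap.proj j) (Pi.single a 1) x
  have hd : (LinearMap.proj (R := K) (φ := fun _ : Fin n => K) j) (Pi.single a 1)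
      = if j = a then 1 else 0 := by
    simp [LinearMap.proj, Pi.single_apply]
  rw [cL, gen]
  rw [show (ExteriorAlgebra.ι K : (Fin n → K) →ₗ[K] Grass K n) = CliffordAlgebra.ι 0 from rfl]
  rw [h, hd]
  by_cases hja : j = a <;> simp [hja]

lemma cL_one (j : Fin n) : cL j (1 : Grass K n) = 0 := by
  have := CliffordAlgebra.contractLeft_algebraMap (R := K) (M := Fin n → K)
    (0 : QuadraticForm K (Fin n → K)) (LinearMap.proj j) 1
  simp only [map_one] at this; exact this

lemma cL_monList_not_mem {j : Fin n} {l : List (Fin n)} (h : j ∉ l) :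
    cL j (monList K n l) = 0 := by
  induction l with
  | nil => exact cL_one j
  | cons a t ih =>
      rw [monList_cons, cL_gen_mul, if_neg (fun hh => h (by rw [hh]; exact List.mem_cons_self)),
        ih (fun hh => h (List.mem_cons_of_mem a hh)), mul_zero, zero_sub, neg_zero]

lemma cL_monList_mem {j : Fin n} {l : List (Fin n)} (h : j ∈ l) (hnd : l.Nodup) :
    ∃ c : K, IsPM c ∧ cL j (monList K n l) = c • monList K n (l.erase j) := by
  induction l with
  | nil => simp at h
  | cons a t ih =>
      rw [List.nodup_cons] at hnd
      by_cases ha : j = a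
      · subst ha
        refine ⟨1, IsPM.one, ?_⟩
        rw [monList_cons, cL_gen_mul, if_pos rfl, cL_monList_not_mem hnd.1, mul_zero, sub_zero,
          List.erase_cons_head, one_smul]
      · have hjt : j ∈ t := by
          rcases List.mem_cons.mp h with h' | h'
          · exact absurd h' ha
          · exact h'
        obtain ⟨c, hc, hee⟩ := ih hjt hnd.2
        refine ⟨-c, hc.neg, ?_⟩
        rw [monList_cons, cL_gen_mul, if_neg ha, hee, zero_sub, mul_smul_comm,
          List.erase_cons_tail, monList_cons, neg_smul]
        simp [ha, Ne.symm ha]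

noncomputable def contr : List (Fin n) → (Grass K n →ₗ[K] Grass K n)
  | [] => LinearMap.id
  | j :: t => (contr t) ∘ₗ cL j

noncomputable def phi (dl : List (Fin n)) : Grass K n →ₗ[K] K :=
  (algebraMapInv : ExteriorAlgebra K (Fin n → K) →ₐ[K] K).toLinearMap ∘ₗ contr dl

lemma phi_nil (x : Grass K n) : phi [] x = algebraMapInv x := rfl

lemma phi_cons (j : Fin n) (t : List (Fin n)) (x : Grass K n) :
    phi (j :: t) x = phi t (cL j x) := rfl

lemma algebraMapInv_gen (a : Fin n) : algebraMapInv (gen K n a) = 0 := by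
  rw [gen, algebraMapInv, lift_ι_apply]
  rfl

lemma algebraMapInv_monList (l : List (Fin n)) :
    algebraMapInv (monList K n l) = if l = [] then (1 : K) else 0 := by
  cases l with
  | nil => simp [monList_nil]
  | cons a t =>
      rw [monList_cons, map_mul, algebraMapInv_gen, zero_mul, if_neg (by simp)]

lemma phi_monList (dl : List (Fin n)) (hdl : dl.Nodup) :
    ∀ l : List (Fin n), l.Nodup →
      (l.toFinset ≠ dl.toFinset → phi dl (monList K n l) = 0) ∧
      (l.toFinset = dl.toFinset → IsPM (phi dl (monList K n l))) := by
  induction dl with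
  | nil =>
      intro l hl
      constructor
      · intro hne
        rw [phi_nil, algebraMapInv_monList, if_neg]
        intro h
        exact hne (by simp [h])
      · intro heq
        simp only [List.toFinset_nil] at heq
        rw [List.toFinset_eq_empty_iff] at heq
        rw [phi_nil, algebraMapInv_monList, if_pos heq]
        exact IsPM.one
  | cons j t ih =>
      rw [List.nodup_cons] at hdl
      intro l hl
      by_cases hjl : j ∈ l
      · obtain ⟨c, hc, hee⟩ := cL_monList_mem (K := K) hjl hl
        have hkey : phi (j :: t) (monList K n l) = c * phi t (monList K n (l.erase j)) := by
          rw [phi_cons, hee, map_smul, smul_eq_mul]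
        have hnde : (l.erase j).Nodup := hl.erase j
        have htfe : (l.erase j).toFinset = l.toFinset.erase j := by
          ext x
          simp only [List.mem_toFinset, Finset.mem_erase]
          exact hl.mem_erase_iff
        have hiff : l.toFinset = (j :: t).toFinset ↔ (l.erase j).toFinset = t.toFinset := by
          rw [htfe]
          constructor
          · intro h
            rw [h]
            simp only [List.toFinset_cons]
            rw [Finset.erase_insert (by simpa using hdl.1)]
          · intro h
            have : l.toFinset = insert j (l.toFinset.erase j) :=
              (Finset.insert_erase (by simpa using hjl)).symm
            rw [this, h]
            simp
        obtain ⟨ihz, ihp⟩ := ih hdl.2 (l.erase j) hnde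
        constructor
        · intro hne
          rw [hkey, ihz (fun h => hne (hiff.mpr h)), mul_zero]
        · intro heq
          rw [hkey]
          exact hc.mul (ihp (hiff.mp heq))
      · have h0 : phi (j :: t) (monList K n l) = 0 := by
          rw [phi_cons, cL_monList_not_mem hjl, map_zero]
        constructor
        · intro _; exact h0
        · intro heq
          exfalso
          apply hjl
          rw [← List.mem_toFinset, heq]
          simp

lemma phi_monList_eq_zero {dl l : List (Fin n)} (hdl : dl.Nodup)
    (h : l.toFinset ≠ dl.toFinset) : phi dl (monList K n l) = 0 := by
  by_cases hl : l.Nodup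
  · exact ((phi_monList dl hdl l hl).1) h
  · rw [monList_not_nodup hl, map_zero]

lemma phi_monList_isPM {dl : List (Fin n)} (hdl : dl.Nodup) :
    IsPM (phi dl (monList K n dl)) := (phi_monList dl hdl dl hdl).2 rfl

/-- `bd` of a monomial lies in the span of monomials on sublists. -/
lemma bd_monList_sublist_span (l : List (Fin n)) :
    bd K n (monList K n l) ∈
      Submodule.span K {x : Grass K n | ∃ l', l'.Sublist l ∧ x = monList K n l'} := by
  induction l with
  | nil =>
      rw [monList_nil, bd_one]
      exact Submodule.zero_mem _
  | cons a t ih =>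
      rw [monList_cons, bd_gen_mul]
      refine Submodule.sub_mem _ ?_ ?_
      · exact Submodule.subset_span ⟨t, List.sublist_cons_self a t, rfl⟩
      · have hmap : gen K n a * bd K n (monList K n t)
            ∈ Submodule.map (LinearMap.mulLeft K (gen K n a))
              (Submodule.span K {x : Grass K n | ∃ l', l'.Sublist t ∧ x = monList K n l'}) :=
          ⟨_, ih, rfl⟩
        rw [Submodule.map_span] at hmap
        refine Submodule.span_le.mpr ?_ hmap
        rintro _ ⟨_, ⟨l', hl', rfl⟩, rfl⟩
        exact Submodule.subset_span ⟨a :: l', hl'.cons₂ a, (monList_cons a l').symm⟩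

/-! ### Monomials span the Grassmann algebra; the quadratic ideal as a monomial span -/

def monSet (K : Type) [Field K] (n : ℕ) : Set (Grass K n) := {x | ∃ l, x = monList K n l}

lemma single_eq_smul (j : Fin n) (r : K) :
    (Pi.single j r : Fin n → K) = r • (Pi.single j 1 : Fin n → K) := by
  ext k
  by_cases hk : k = j <;> simp [Pi.single_apply, hk]

lemma iota_expand (v : Fin n → K) :
    ExteriorAlgebra.ι K v = ∑ j, v j • gen K n j := by
  have hv : v = ∑ j, Pi.single j (v j) := (Finset.univ_sum_single v).symm
  conv_lhs => rw [hv, map_sum]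
  refine Finset.sum_congr rfl fun j _ => ?_
  rw [single_eq_smul, map_smul, gen]

lemma monList_mem_span (x : Grass K n) : x ∈ Submodule.span K (monSet K n) := by
  induction x using ExteriorAlgebra.induction with
  | algebraMap r =>
      rw [Algebra.algebraMap_eq_smul_one]
      exact Submodule.smul_mem _ _ (Submodule.subset_span ⟨[], monList_nil.symm⟩)
  | ι v =>
      rw [iota_expand]
      exact Submodule.sum_mem _ fun j _ =>
        Submodule.smul_mem _ _ (Submodule.subset_span ⟨[j], by simp [monList]⟩)
  | mul x y hx hy =>
      have h := Submodule.mul_mem_mul hx hy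
      rw [Submodule.span_mul_span] at h
      refine Submodule.span_le.mpr ?_ h
      rintro z hz
      rw [Set.mem_mul] at hz
      obtain ⟨a, ha, b, hb, rfl⟩ := hz
      obtain ⟨l₁, rfl⟩ := ha
      obtain ⟨l₂, rfl⟩ := hb
      exact Submodule.subset_span ⟨l₁ ++ l₂, (monList_append l₁ l₂).symm⟩
  | add x y hx hy => exact Submodule.add_mem _ hx hy

lemma gen_mul_iota (a : Fin n) (v : Fin n → K) :
    gen K n a * ExteriorAlgebra.ι K v = -(ExteriorAlgebra.ι K v * gen K n a) := by
  have h := ι_add_mul_swap (R := K) (Pi.single a (1:K) : Fin n → K) v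
  rw [← gen] at h
  exact eq_neg_of_add_eq_zero_left h

lemma two_gen_comm (a b : Fin n) (y : Grass K n) :
    gen K n a * gen K n b * y = y * (gen K n a * gen K n b) := by
  induction y using ExteriorAlgebra.induction with
  | algebraMap r => exact (Algebra.commutes r _).symm
  | ι v =>
      rw [mul_assoc, gen_mul_iota b v, mul_neg, ← mul_assoc, gen_mul_iota a v, neg_mul,
        neg_neg, mul_assoc]
  | mul x y hx hy => rw [← mul_assoc, hx, mul_assoc, hy, ← mul_assoc]
  | add x y hx hy => rw [mul_add, add_mul, hx, hy]

lemma bd_monList_three (a b c : Fin n) :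
    bd K n (monList K n [a, b, c])
      = gen K n b * gen K n c - gen K n a * gen K n c + gen K n a * gen K n b := by
  rw [show ([a, b, c] : List (Fin n)) = a :: b :: c :: [] from rfl,
    monList_cons, monList_cons, monList_cons, monList_nil,
    bd_gen_mul, bd_gen_mul, bd_gen_mul, bd_one]
  noncomm_ring

lemma bd_mon_three {T : Finset (Fin n)} (hT : T.card = 3) :
    ∃ a b c : Fin n, a ≠ b ∧ a ≠ c ∧ b ≠ c ∧ a ∈ T ∧ b ∈ T ∧ c ∈ T ∧
      bd K n (mon K n T)
        = gen K n b * gen K n c - gen K n a * gen K n c + gen K n a * gen K n b := by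
  have hlen : (T.sort (· ≤ ·)).length = 3 := by rw [Finset.length_sort]; exact hT
  obtain ⟨a, b, c, habc⟩ := List.length_eq_three.mp hlen
  have hnd := Finset.sort_nodup T (· ≤ ·)
  rw [habc] at hnd
  have hna : a ∉ [b, c] := (List.nodup_cons.mp hnd).1
  have hnd2 := (List.nodup_cons.mp hnd).2
  have hnb : b ∉ [c] := (List.nodup_cons.mp hnd2).1
  have hab : a ≠ b := fun h => hna (by simp [h])
  have hac : a ≠ c := fun h => hna (by simp [h])
  have hbc : b ≠ c := fun h => hnb (by simp [h])
  have hmema : a ∈ T := Finset.mem_sort (· ≤ ·) |>.mp (by rw [habc]; simp)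
  have hmemb : b ∈ T := Finset.mem_sort (· ≤ ·) |>.mp (by rw [habc]; simp)
  have hmemc : c ∈ T := Finset.mem_sort (· ≤ ·) |>.mp (by rw [habc]; simp)
  refine ⟨a, b, c, hab, hac, hbc, hmema, hmemb, hmemc, ?_⟩
  rw [mon, habc, bd_monList_three]

lemma bd_mon_three_comm {T : Finset (Fin n)} (hT : T.card = 3) (y : Grass K n) :
    bd K n (mon K n T) * y = y * bd K n (mon K n T) := by
  obtain ⟨a, b, c, _, _, _, _, _, _, hexp⟩ := bd_mon_three (K := K) hT
  rw [hexp]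
  simp only [sub_mul, add_mul, mul_sub, mul_add, two_gen_comm]

variable (K) in
/-- The quadratic ideal, described as a left span of monomial multiples of the generators. -/
noncomputable def M0 (M : Matroid (Fin n)) : Submodule K (Grass K n) :=
  Submodule.span K {x : Grass K n | ∃ (l : List (Fin n)) (T : Finset (Fin n)),
    T ∈ CircuitsLe M 3 ∧ x = monList K n l * bd K n (mon K n T)}

lemma M0_mul_left (x : Grass K n) : ∀ y ∈ M0 K M, x * y ∈ M0 K M := by
  induction x using ExteriorAlgebra.induction with
  | algebraMap r =>
      intro y hy
      rw [← Algebra.smul_def]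
      exact Submodule.smul_mem _ _ hy
  | ι v =>
      intro y hy
      induction hy using Submodule.span_induction with
      | mem z hz =>
          obtain ⟨l, T, hT, rfl⟩ := hz
          rw [← mul_assoc, iota_expand, Finset.sum_mul, Finset.sum_mul]
          refine Submodule.sum_mem _ fun j _ => ?_
          rw [smul_mul_assoc, smul_mul_assoc]
          refine Submodule.smul_mem _ _ ?_
          rw [mul_assoc]
          exact Submodule.subset_span ⟨j :: l, T, hT, by rw [monList_cons, mul_assoc]⟩
      | zero => rw [mul_zero]; exact Submodule.zero_mem _
      | add u w _ _ hu hw => rw [mul_add]; exact Submodule.add_mem _ hu hw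
      | smul c u _ hu => rw [mul_smul_comm]; exact Submodule.smul_mem _ _ hu
  | mul x₁ x₂ hx₁ hx₂ =>
      intro y hy
      rw [mul_assoc]
      exact hx₁ _ (hx₂ _ hy)
  | add x₁ x₂ hx₁ hx₂ =>
      intro y hy
      rw [add_mul]
      exact Submodule.add_mem _ (hx₁ _ hy) (hx₂ _ hy)

lemma mul_gen3_mem_M0 {T : Finset (Fin n)} (hT : T ∈ CircuitsLe M 3) {z : Grass K n} :
    z * bd K n (mon K n T) ∈ M0 K M := by
  have hz := monList_mem_span (K := K) (n := n) z
  induction hz using Submodule.span_induction with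
  | mem w hw =>
      obtain ⟨l, rfl⟩ := hw
      exact Submodule.subset_span ⟨l, T, hT, rfl⟩
  | zero => rw [zero_mul]; exact Submodule.zero_mem _
  | add u w _ _ hu hw => rw [add_mul]; exact Submodule.add_mem _ hu hw
  | smul c u _ hu => rw [smul_mul_assoc]; exact Submodule.smul_mem _ _ hu

lemma M0_mul_right (hs : SimpleM M) {x : Grass K n} (hx : x ∈ M0 K M) (y : Grass K n) :
    x * y ∈ M0 K M := by
  induction hx using Submodule.span_induction with
  | mem z hz =>
      obtain ⟨l, T, hT, rfl⟩ := hz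
      have hcard : T.card = 3 := le_antisymm hT.2 (hs T hT.1)
      rw [mul_assoc, bd_mon_three_comm hcard y, ← mul_assoc]
      exact mul_gen3_mem_M0 hT
  | zero => rw [zero_mul]; exact Submodule.zero_mem _
  | add u w _ _ hu hw => rw [add_mul]; exact Submodule.add_mem _ hu hw
  | smul c u _ hu => rw [smul_mul_assoc]; exact Submodule.smul_mem _ _ hu

variable (K) in
noncomputable def J0 (M : Matroid (Fin n)) (hs : SimpleM M) : TwoSidedIdeal (Grass K n) :=
  TwoSidedIdeal.mk' (M0 K M)
    (Submodule.zero_mem _) (fun ha hb => Submodule.add_mem _ ha hb)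
    (fun ha => Submodule.neg_mem _ ha)
    (fun {x y} hy => M0_mul_left x y hy)
    (fun {x y} hx => M0_mul_right hs hx y)

lemma mem_J0 (hs : SimpleM M) (x : Grass K n) : x ∈ J0 K M hs ↔ x ∈ M0 K M :=
  TwoSidedIdeal.mem_mk' _ _ _ _ _ _ x

lemma mem_M0_of_mem_OSIdeal (hs : SimpleM M) {z : Grass K n}
    (hz : z ∈ OSIdeal K n (CircuitsLe M 3)) : z ∈ M0 K M := by
  rw [← mem_J0 hs]
  refine TwoSidedIdeal.mem_span_iff.mp hz (J0 K M hs) ?_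
  rintro _ ⟨T, hT, rfl⟩
  exact SetLike.mem_coe.mpr ((mem_J0 hs _).mpr
    (Submodule.subset_span ⟨[], T, hT, by rw [monList_nil, one_mul]⟩))

/-! ### The combinatorial heart: a chordless circuit meets no triangle in two points -/

lemma no_close_triangle (hb : BinaryM M) {C : Finset (Fin n)} (hC : IsCircuit M C)
    (h4 : 4 ≤ C.card) (hnch : ¬ HasChord M C) :
    ∀ T : Finset (Fin n), IsCircuit M T → T.card = 3 → (T ∩ C).card ≤ 1 := by
  intro T hT hT3
  by_contra hge
  push_neg at hge
  obtain ⟨a, haTC, b, hbTC, hab⟩ := Finset.one_lt_card.mp hge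
  have haT : a ∈ T := (Finset.mem_inter.mp haTC).1
  have haC : a ∈ C := (Finset.mem_inter.mp haTC).2
  have hbT : b ∈ T := (Finset.mem_inter.mp hbTC).1
  have hbC : b ∈ C := (Finset.mem_inter.mp hbTC).2
  have hTneC : T ≠ C := fun h => by rw [h] at hT3; omega
  have hTnotsub : ¬ T ⊆ C := fun hsub => hC.2 T (lt_of_le_of_ne hsub hTneC) hT.1
  obtain ⟨t, htT, htC⟩ := Finset.not_subset.mp hTnotsub
  have hta : t ≠ a := fun h => htC (h ▸ haC)
  have htb : t ≠ b := fun h => htC (h ▸ hbC)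
  have hTeq : T = {a, b, t} := by
    have hsub : ({a, b, t} : Finset (Fin n)) ⊆ T := by
      intro x hx
      rcases Finset.mem_insert.mp hx with rfl | hx
      · exact haT
      rcases Finset.mem_insert.mp hx with rfl | hx
      · exact hbT
      · rw [Finset.mem_singleton] at hx; exact hx ▸ htT
    have hcard : ({a, b, t} : Finset (Fin n)).card = 3 := by
      rw [Finset.card_insert_of_notMem (by simp [hab, hta.symm]),
        Finset.card_insert_of_notMem (by simp [htb.symm]), Finset.card_singleton]
    exact (Finset.eq_of_subset_of_card_le hsub (by omega)).symm
  have hmemT : ∀ x, x ∈ T ↔ x = a ∨ x = b ∨ x = t := by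
    intro x; rw [hTeq]; simp
  have hsd : symmDiff C T = (C \ {a, b}) ∪ {t} := by
    ext x
    simp only [symmDiff_def, Finset.sup_eq_union, Finset.mem_union, Finset.mem_sdiff,
      hmemT, Finset.mem_insert, Finset.mem_singleton]
    constructor
    · rintro (⟨hxC, hxT⟩ | ⟨(rfl | rfl | rfl), hxC⟩)
      · push_neg at hxT
        exact Or.inl ⟨hxC, by push_neg; exact ⟨hxT.1, hxT.2.1⟩⟩
      · exact absurd haC hxC
      · exact absurd hbC hxC
      · exact Or.inr rfl
    · rintro (⟨hxC, hx2⟩ | rfl)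
      · push_neg at hx2
        exact Or.inl ⟨hxC, by push_neg; exact ⟨hx2.1, hx2.2, fun h => htC (h ▸ hxC)⟩⟩
      · exact Or.inr ⟨Or.inr (Or.inr rfl), htC⟩
  obtain ⟨C', hC', hC'sub⟩ := hb C T hC hT (Ne.symm hTneC)
  rw [hsd] at hC'sub
  have habsubC : ({a, b} : Finset (Fin n)) ⊆ C := by
    intro x hx
    rcases Finset.mem_insert.mp hx with rfl | hx
    · exact haC
    · rw [Finset.mem_singleton] at hx; exact hx ▸ hbC
  by_cases htC' : t ∈ C'
  · have haC' : a ∉ C' := by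
      intro h
      rcases Finset.mem_union.mp (hC'sub h) with h' | h'
      · exact (Finset.mem_sdiff.mp h').2 (by simp)
      · exact hta (Finset.mem_singleton.mp h').symm
    have hbC' : b ∉ C' := by
      intro h
      rcases Finset.mem_union.mp (hC'sub h) with h' | h'
      · exact (Finset.mem_sdiff.mp h').2 (by simp)
      · exact htb (Finset.mem_singleton.mp h').symm
    by_cases heqC' : C' = (C \ {a, b}) ∪ {t}
    · -- this would give a chord at `t`
      have hmemC' : ∀ x, x ∈ C' ↔ (x ∈ C ∧ x ≠ a ∧ x ≠ b) ∨ x = t := by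
        intro x
        rw [heqC']
        simp only [Finset.mem_union, Finset.mem_sdiff, Finset.mem_singleton,
          Finset.mem_insert]
        tauto
      apply hnch
      refine ⟨t, T, C', hT, hC', ?_, ?_⟩
      · ext x
        simp only [Finset.mem_inter, Finset.mem_singleton, hmemT]
        constructor
        · rintro ⟨(rfl | rfl | rfl), hxC'⟩
          · exact absurd hxC' haC'
          · exact absurd hxC' hbC'
          · rfl
        · rintro rfl
          exact ⟨Or.inr (Or.inr rfl), htC'⟩
      · ext x
        simp only [symmDiff_def, Finset.sup_eq_union, Finset.mem_union, Finset.mem_sdiff,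
          hmemT]
        constructor
        · intro hxC
          by_cases hxa : x = a
          · subst hxa
            exact Or.inl ⟨Or.inl rfl, haC'⟩
          by_cases hxb : x = b
          · subst hxb
            exact Or.inl ⟨Or.inr (Or.inl rfl), hbC'⟩
          · refine Or.inr ⟨(hmemC' x).mpr (Or.inl ⟨hxC, hxa, hxb⟩), ?_⟩
            rintro (rfl | rfl | rfl)
            · exact hxa rfl
            · exact hxb rfl
            · exact htC hxC
        · rintro (⟨(rfl | rfl | rfl), hx⟩ | ⟨hxC', hxT⟩)
          · exact haC
          · exact hbC
          · exact absurd htC' hx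
          · rcases (hmemC' x).mp hxC' with ⟨hxC, _, _⟩ | rfl
            · exact hxC
            · exact absurd (Or.inr (Or.inr rfl)) hxT
    · -- C' is strictly smaller; use binarity again
      have hC'ss : C' ⊂ (C \ {a, b}) ∪ {t} := lt_of_le_of_ne hC'sub heqC'
      have hTneC' : T ≠ C' := fun h => haC' (h ▸ haT)
      obtain ⟨C'', hC'', hC''sub⟩ := hb T C' hT hC' hTneC'
      have hsdsub : symmDiff T C' ⊆ C := by
        intro x hx
        rw [symmDiff_def] at hx
        rcases Finset.mem_union.mp hx with hx | hx
        · obtain ⟨hxT, hxC'⟩ := Finset.mem_sdiff.mp hx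
          rcases (hmemT x).mp hxT with rfl | rfl | rfl
          · exact haC
          · exact hbC
          · exact absurd htC' hxC'
        · obtain ⟨hxC', hxT⟩ := Finset.mem_sdiff.mp hx
          rcases Finset.mem_union.mp (hC'sub hxC') with h' | h'
          · exact (Finset.mem_sdiff.mp h').1
          · exact absurd ((hmemT x).mpr (Or.inr (Or.inr (Finset.mem_singleton.mp h')))) hxT
      obtain ⟨w, hwU, hwC'⟩ := Finset.exists_of_ssubset hC'ss
      have hwmem : w ∈ C \ ({a, b} : Finset (Fin n)) := by
        rcases Finset.mem_union.mp hwU with h' | h'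
        · exact h'
        · exact absurd (show w ∈ C' by rw [Finset.mem_singleton.mp h']; exact htC') hwC'
      have hwC : w ∈ C := (Finset.mem_sdiff.mp hwmem).1
      have hwT : w ∉ T := by
        intro h
        rcases (hmemT w).mp h with rfl | rfl | rfl
        · exact (Finset.mem_sdiff.mp hwmem).2 (by simp)
        · exact (Finset.mem_sdiff.mp hwmem).2 (by simp)
        · exact htC hwC
      have hwsd : w ∉ symmDiff T C' := by
        intro h
        rw [symmDiff_def] at h
        rcases Finset.mem_union.mp h with h' | h'
        · exact hwT (Finset.mem_sdiff.mp h').1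
        · exact hwC' (Finset.mem_sdiff.mp h').1
      have hC''ss : C'' ⊂ C := by
        refine lt_of_le_of_ne (hC''sub.trans hsdsub) ?_
        intro h
        exact hwsd (hC''sub (by rw [h]; exact hwC))
      exact hC.2 C'' hC''ss hC''.1
  · -- t ∉ C' : C' is a proper dependent subset of C
    have hC'subC : C' ⊂ C := by
      have h1 : C' ⊆ C \ {a, b} := by
        intro x hx
        rcases Finset.mem_union.mp (hC'sub hx) with h' | h'
        · exact h'
        · exact absurd ((Finset.mem_singleton.mp h') ▸ hx) htC'
      exact lt_of_le_of_lt h1 (Finset.sdiff_ssubset habsubC (by simp))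
    exact hC.2 C' hC'subC hC'.1

/-! ### The coefficient functional separates `∂ e_C` from the quadratic ideal -/

lemma phi_gen_mul_sublist_zero {dl : List (Fin n)} (hdl : dl.Nodup) {c₀ : Fin n}
    (hc₀ : c₀ ∉ dl.toFinset) :
    phi dl (gen K n c₀ * bd K n (monList K n dl)) = 0 := by
  suffices H : ∀ z ∈ Submodule.span K
      {x : Grass K n | ∃ l', l'.Sublist dl ∧ x = monList K n l'},
      phi dl (gen K n c₀ * z) = 0 from H _ (bd_monList_sublist_span (K := K) dl)
  intro z hz
  induction hz using Submodule.span_induction with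
  | mem z hz =>
      obtain ⟨l', hl', rfl⟩ := hz
      rw [← monList_cons]
      refine phi_monList_eq_zero hdl ?_
      intro h
      apply hc₀
      rw [← h]
      simp
  | zero => rw [mul_zero, map_zero]
  | add u w _ _ hu hw => rw [mul_add, map_add, hu, hw, add_zero]
  | smul c u _ hu => rw [mul_smul_comm, map_smul, hu, smul_zero]

lemma phi_bd_mon_ne_zero {C : Finset (Fin n)} (hne : C.Nonempty) :
    phi ((C.erase (C.min' hne)).sort (· ≤ ·)) (bd K n (mon K n C)) ≠ 0 := by
  set c₀ := C.min' hne with hc₀def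
  set dl := (C.erase c₀).sort (· ≤ ·) with hdldef
  have hc₀C : c₀ ∈ C := Finset.min'_mem C hne
  have hdlnd : dl.Nodup := Finset.sort_nodup _ _
  have htfdl : dl.toFinset = C.erase c₀ := Finset.sort_toFinset _ _
  have hc₀dl : c₀ ∉ dl := by
    intro h
    have : c₀ ∈ C.erase c₀ := htfdl ▸ List.mem_toFinset.mpr h
    simp at this
  have hnd : (c₀ :: dl).Nodup := List.nodup_cons.mpr ⟨hc₀dl, hdlnd⟩
  have htf : (c₀ :: dl).toFinset = C := by
    rw [List.toFinset_cons, htfdl, Finset.insert_erase hc₀C]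
  obtain ⟨c, hc, hmc⟩ := monList_eq_smul_mon (K := K) hnd
  rw [htf] at hmc
  have hval : phi dl (bd K n (monList K n (c₀ :: dl))) = c * phi dl (bd K n (mon K n C)) := by
    rw [hmc, map_smul, map_smul, smul_eq_mul]
  have hexp : bd K n (monList K n (c₀ :: dl))
      = monList K n dl - gen K n c₀ * bd K n (monList K n dl) := by
    rw [monList_cons, bd_gen_mul]
  have hzero : phi dl (gen K n c₀ * bd K n (monList K n dl)) = 0 :=
    phi_gen_mul_sublist_zero hdlnd (by rw [htfdl]; simp)
  have hpm : IsPM (phi dl (monList K n dl)) := phi_monList_isPM hdlnd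
  intro h0
  rw [h0, mul_zero] at hval
  rw [hexp, map_sub, hzero, sub_zero] at hval
  exact hpm.ne_zero hval

lemma phi_zero_on_M0 (hs : SimpleM M) (hb : BinaryM M) {C : Finset (Fin n)}
    (hC : IsCircuit M C) (h4 : 4 ≤ C.card) (hnch : ¬ HasChord M C) (hne : C.Nonempty)
    {z : Grass K n} (hz : z ∈ M0 K M) :
    phi ((C.erase (C.min' hne)).sort (· ≤ ·)) z = 0 := by
  set c₀ := C.min' hne with hc₀def
  set dl := (C.erase c₀).sort (· ≤ ·) with hdldef
  have hdlnd : dl.Nodup := Finset.sort_nodup _ _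
  have htfdl : dl.toFinset = C.erase c₀ := Finset.sort_toFinset _ _
  -- a pair of distinct elements of a triangle cannot both be in `C.erase c₀`
  have hkey : ∀ (l : List (Fin n)) (u v : Fin n) (T : Finset (Fin n)), IsCircuit M T →
      T.card = 3 → u ≠ v → u ∈ T → v ∈ T →
      phi dl (monList K n l * (gen K n u * gen K n v)) = 0 := by
    intro l u v T hT hT3 huv huT hvT
    have hml : monList K n l * (gen K n u * gen K n v) = monList K n (l ++ [u, v]) := by
      rw [monList_append]
      congr 1
      simp [monList, mul_assoc]
    rw [hml]
    by_cases hndl : (l ++ [u, v]).Nodup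
    · refine phi_monList_eq_zero hdlnd ?_
      intro h
      have huC : u ∈ C := by
        have : u ∈ (l ++ [u, v]).toFinset := by simp
        rw [h, htfdl] at this
        exact Finset.mem_of_mem_erase this
      have hvC : v ∈ C := by
        have : v ∈ (l ++ [u, v]).toFinset := by simp
        rw [h, htfdl] at this
        exact Finset.mem_of_mem_erase this
      have hsubTC : ({u, v} : Finset (Fin n)) ⊆ T ∩ C := by
        intro x hx
        rcases Finset.mem_insert.mp hx with rfl | hx
        · exact Finset.mem_inter.mpr ⟨huT, huC⟩
        · rw [Finset.mem_singleton] at hx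
          exact hx ▸ Finset.mem_inter.mpr ⟨hvT, hvC⟩
      have hcard2 : ({u, v} : Finset (Fin n)).card = 2 := by
        rw [Finset.card_insert_of_notMem (by simp [huv]), Finset.card_singleton]
      have := Finset.card_le_card hsubTC
      have hle1 := no_close_triangle hb hC h4 hnch T hT hT3
      omega
    · rw [monList_not_nodup hndl, map_zero]
  induction hz using Submodule.span_induction with
  | mem z hz =>
      obtain ⟨l, T, hT, rfl⟩ := hz
      have hcard3 : T.card = 3 := le_antisymm hT.2 (hs T hT.1)
      obtain ⟨a, b, c, hab, hac, hbc, haT, hbT, hcT, hexp⟩ := bd_mon_three (K := K) hcard3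
      rw [hexp, mul_add, mul_sub, map_add, map_sub,
        hkey l b c T hT.1 hcard3 hbc hbT hcT,
        hkey l a c T hT.1 hcard3 hac haT hcT,
        hkey l a b T hT.1 hcard3 hab haT hbT]
      ring
  | zero => rw [map_zero]
  | add u w _ _ hu hw => rw [map_add, hu, hw, add_zero]
  | smul r u _ hu => rw [map_smul, hu, smul_zero]


end Aux

/-- a binary matroid `M` is chordal (4-chordal) iff `OS(M)` is quadratic,
i.e. `ℑ(𝔠) = ℑ(𝔠₃)`. -/
theorem stmt12 (K : Type) [Field K] (n : ℕ) (M : Matroid (Fin n)) (hE : M.E = Set.univ)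
    (hs : SimpleM M) (hb : BinaryM M) :
    Chordal M 4 ↔ OSIdeal K n (Circuits M) = OSIdeal K n (CircuitsLe M 3) := by
  constructor
  · intro hch
    apply le_antisymm
    · rw [TwoSidedIdeal.le_iff]
      intro x hx
      refine TwoSidedIdeal.mem_span_iff.mp hx _ ?_
      rintro _ ⟨C, hC, rfl⟩
      exact circuits_mem hch hs C hC
    · exact TwoSidedIdeal.span_mono (Set.image_mono fun C hC => hC.1)
  · intro heq C hC h4
    by_contra hnch
    have hne : C.Nonempty := Finset.card_pos.mp (by omega)
    have hgen : bd K n (mon K n C) ∈ OSIdeal K n (Circuits M) :=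
      TwoSidedIdeal.subset_span ⟨C, hC, rfl⟩
    rw [heq] at hgen
    have hM0 : bd K n (mon K n C) ∈ M0 K M := mem_M0_of_mem_OSIdeal hs hgen
    exact phi_bd_mon_ne_zero (K := K) hne (phi_zero_on_M0 hs hb hC h4 hnch hne hM0)
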